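/- Block-decomposed states are quantum Markov states: Let r, u, j, v, c be finite types (registers R, B^R, J, B^C, C), let p be a probability distribution on j, and for each j let α_j be a density matrix on r × u and β_j a density matrix on v × c. Let σ be the density matrix on R ⊗ B ⊗ C, where B = B^R ⊗ J ⊗ B^C (index type r × (u × j × v) × c), given by σ = ∑_j p(j) · α_j ⊗ |j⟩⟨j| ⊗ β_j, i.e., σ((x,(u₁,j₁,v₁),y),(x',(u₂,j₂,v₂),y')) equals p(j₁)·α_{j₁}((x,u₁),(x',u₂))·β_{j₁}((v₁,y),(v₂,y')) if j₁ = j₂ and 0 otherwise. Then S(σ^{RB}) + S(σ^{BC}) = S(σ^{RBC}) + S(σ^{B}); equivalently, the quantum conditional mutual information I(R:C|B)_σ = 0. -/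

import Mathlib

open Matrix Kronecker
open scoped ComplexOrder Classical

/-- A density matrix: a positive semidefinite matrix of trace 1. -/
def IsDensityMatrix {n : Type*} [Fintype n] (ρ : Matrix n n ℂ) : Prop :=
  ρ.PosSemidef ∧ ρ.trace = 1

/-- Matrix logarithm of a Hermitian matrix, obtained by applying the natural logarithm to
each eigenvalue in a spectral decomposition (with the convention `log 0 = 0`, as in
`Real.log`).  Junk value `0` on non-Hermitian matrices. -/
noncomputable def matLog {n : Type*} [Fintype n] [DecidableEq n] (A : Matrix n n ℂ) :
    Matrix n n ℂ :=
  if hA : A.IsHermitian then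
    (hA.eigenvectorUnitary : Matrix n n ℂ) *
      Matrix.diagonal (fun i => ((Real.log (hA.eigenvalues i) : ℝ) : ℂ)) *
      (star hA.eigenvectorUnitary : Matrix n n ℂ)
  else 0

/-- Von Neumann entropy `S(ρ) = −Tr(ρ log ρ)`. -/
noncomputable def vnEntropy {n : Type*} [Fintype n] [DecidableEq n] (ρ : Matrix n n ℂ) : ℝ :=
  -(((ρ * matLog ρ).trace).re)

/-- Quantum relative entropy `D(ρ‖σ) = Tr(ρ (log ρ − log σ))`. -/
noncomputable def relEntropy {n : Type*} [Fintype n] [DecidableEq n]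
    (ρ σ : Matrix n n ℂ) : ℝ :=
  ((ρ * (matLog ρ - matLog σ)).trace).re

/-- Marginal on `R ⊗ B` of a tripartite state on `R ⊗ B ⊗ C`. -/
noncomputable def margRB {r b c : Type*} [Fintype c]
    (ψ : Matrix (r × b × c) (r × b × c) ℂ) : Matrix (r × b) (r × b) ℂ :=
  Matrix.of fun p q => ∑ z : c, ψ (p.1, p.2, z) (q.1, q.2, z)

/-- Marginal on `B ⊗ C` of a tripartite state on `R ⊗ B ⊗ C`. -/
noncomputable def margBC {r b c : Type*} [Fintype r]
    (ψ : Matrix (r × b × c) (r × b × c) ℂ) : Matrix (b × c) (b × c) ℂ :=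
  Matrix.of fun p q => ∑ x : r, ψ (x, p.1, p.2) (x, q.1, q.2)

/-- Marginal on `B` of a tripartite state on `R ⊗ B ⊗ C`. -/
noncomputable def margB {r b c : Type*} [Fintype r] [Fintype c]
    (ψ : Matrix (r × b × c) (r × b × c) ℂ) : Matrix b b ℂ :=
  Matrix.of fun y y' => ∑ x : r, ∑ z : c, ψ (x, y, z) (x, y', z)

/-- Quantum conditional mutual information
`I(R:C|B)_ψ = S(ψ^{RB}) + S(ψ^{BC}) − S(ψ^{RBC}) − S(ψ^{B})`. -/
noncomputable def condMutualInfo {r b c : Type*}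
    [Fintype r] [DecidableEq r] [Fintype b] [DecidableEq b] [Fintype c] [DecidableEq c]
    (ψ : Matrix (r × b × c) (r × b × c) ℂ) : ℝ :=
  vnEntropy (margRB ψ) + vnEntropy (margBC ψ) - vnEntropy ψ - vnEntropy (margB ψ)


/-! ### Auxiliary lemmas -/

section CharpolyAux

open Polynomial

lemma charpoly_conj_unit {n : Type*} [Fintype n] [DecidableEq n]
    (W A : Matrix n n ℂ) (hW : W * star W = 1) :
    (W * A * star W).charpoly = A.charpoly := by
  let MC : Matrix n n ℂ →+* Matrix n n ℂ[X] := (Polynomial.C : ℂ →+* ℂ[X]).mapMatrix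
  have mcmul : ∀ P Q : Matrix n n ℂ, MC (P * Q) = MC P * MC Q := fun P Q => _root_.map_mul MC P Q
  have mcone : MC 1 = 1 := _root_.map_one MC
  have key : charmatrix (W * A * star W) = MC W * charmatrix A * MC (star W) := by
    show Matrix.scalar n X - MC (W * A * star W)
        = MC W * (Matrix.scalar n X - MC A) * MC (star W)
    rw [mcmul, mcmul, Matrix.mul_sub, Matrix.sub_mul]
    congr 1
    calc Matrix.scalar n (X : ℂ[X])
        = Matrix.scalar n X * (MC W * MC (star W)) := by rw [← mcmul, hW, mcone, mul_one]
      _ = MC W * Matrix.scalar n X * MC (star W) := by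
          rw [← mul_assoc, (Matrix.scalar_commute (X : ℂ[X]) (Commute.all _) (MC W)).eq]
  rw [Matrix.charpoly, Matrix.charpoly, key, det_mul, det_mul]
  have h2 : (MC W).det * (MC (star W)).det = 1 := by
    rw [← det_mul, ← mcmul, hW, mcone, det_one]
  calc (MC W).det * (charmatrix A).det * (MC (star W)).det
      = (charmatrix A).det * ((MC W).det * (MC (star W)).det) := by ring
    _ = (charmatrix A).det := by rw [h2, mul_one]

lemma charpoly_diagonal {n : Type*} [Fintype n] [DecidableEq n] (d : n → ℂ) :
    (Matrix.diagonal d).charpoly = ∏ i, (X - C (d i)) := by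
  have : charmatrix (Matrix.diagonal d) = Matrix.diagonal fun i => X - C (d i) := by
    ext i k
    by_cases h : i = k
    · subst h; simp [charmatrix_apply_eq]
    · simp [charmatrix_apply_ne _ _ _ h, Matrix.diagonal_apply_ne _ h]
  rw [Matrix.charpoly, this, det_diagonal]

lemma multiset_eq_of_conj {n : Type*} [Fintype n] [DecidableEq n]
    {W V : Matrix n n ℂ} (hW : W * star W = 1) (hV : V * star V = 1)
    {d e : n → ℂ}
    (h : W * Matrix.diagonal d * star W = V * Matrix.diagonal e * star V) :
    Finset.univ.val.map d = Finset.univ.val.map e := by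
  have hc : (Matrix.diagonal d).charpoly = (Matrix.diagonal e).charpoly := by
    have := congrArg Matrix.charpoly h
    rwa [charpoly_conj_unit _ _ hW, charpoly_conj_unit _ _ hV] at this
  rw [_root_.charpoly_diagonal, _root_.charpoly_diagonal] at hc
  have hroots : ∀ f : n → ℂ, (∏ i, (X - C (f i))).roots = Finset.univ.val.map f := by
    intro f
    rw [Finset.prod_eq_multiset_prod]
    have : Finset.univ.val.map (fun i => X - C (f i))
        = (Finset.univ.val.map f).map (fun a => X - C a) := by
      rw [Multiset.map_map]; rfl
    rw [this, Polynomial.roots_multiset_prod_X_sub_C]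
  have := hroots d
  rw [hc, hroots e] at this
  exact this.symm

end CharpolyAux

lemma vnEntropy_of_decomp {n : Type*} [Fintype n] [DecidableEq n]
    {ρ W : Matrix n n ℂ} {d : n → ℝ} (hW : W * star W = 1)
    (hρ : ρ = W * Matrix.diagonal (fun i => (d i : ℂ)) * star W) :
    vnEntropy ρ = -∑ i, d i * Real.log (d i) := by
  have hHerm : ρ.IsHermitian := by
    rw [hρ]
    show _ᴴ = _
    simp [Matrix.conjTranspose_mul, Matrix.star_eq_conjTranspose,
      Matrix.diagonal_conjTranspose, Pi.star_def, Complex.conj_ofReal, mul_assoc]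
  set U : Matrix n n ℂ := (hHerm.eigenvectorUnitary : Matrix n n ℂ) with hUdef
  set ev : n → ℝ := hHerm.eigenvalues with hevdef
  have hU : U * star U = 1 := Matrix.mem_unitaryGroup_iff.mp hHerm.eigenvectorUnitary.2
  have hU' : star U * U = 1 := Matrix.mem_unitaryGroup_iff'.mp hHerm.eigenvectorUnitary.2
  have hspec : ρ = U * Matrix.diagonal (fun i => (ev i : ℂ)) * star U := by
    convert hHerm.spectral_theorem using 2
    rw [Unitary.conjStarAlgAut_apply]; rfl
  have hlog : matLog ρ = U * Matrix.diagonal (fun i => ((Real.log (ev i) : ℝ) : ℂ)) * star U := by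
    rw [matLog, dif_pos hHerm]
  have hmul : ρ * matLog ρ
      = U * Matrix.diagonal (fun i => ((ev i : ℂ)) * ((Real.log (ev i) : ℝ) : ℂ)) * star U := by
    rw [hlog]; nth_rewrite 1 [hspec]
    calc U * Matrix.diagonal (fun i => (ev i : ℂ)) * star U *
          (U * Matrix.diagonal (fun i => ((Real.log (ev i) : ℝ) : ℂ)) * star U)
        = U * Matrix.diagonal (fun i => (ev i : ℂ)) * (star U * U) *
            Matrix.diagonal (fun i => ((Real.log (ev i) : ℝ) : ℂ)) * star U := by
          simp only [mul_assoc]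
      _ = U * (Matrix.diagonal (fun i => (ev i : ℂ)) *
            Matrix.diagonal (fun i => ((Real.log (ev i) : ℝ) : ℂ))) * star U := by
          rw [hU']; simp only [mul_one, mul_assoc]
      _ = _ := by rw [Matrix.diagonal_mul_diagonal]
  have htr : (ρ * matLog ρ).trace = ∑ i, ((ev i : ℂ)) * ((Real.log (ev i) : ℝ) : ℂ) := by
    rw [hmul, Matrix.trace_mul_cycle, hU', one_mul, Matrix.trace_diagonal]
  have me : Finset.univ.val.map (fun i => (ev i : ℂ))
      = Finset.univ.val.map (fun i => (d i : ℂ)) :=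
    multiset_eq_of_conj hU hW (hspec.symm.trans hρ)
  set G : ℂ → ℝ := fun z => z.re * Real.log z.re with hG
  have key : ∀ f : n → ℝ, ((Finset.univ.val.map (fun i => (f i : ℂ))).map G).sum
      = ∑ i, f i * Real.log (f i) := by
    intro f
    rw [Multiset.map_map]
    have hfun : (G ∘ fun i => ((f i : ℝ) : ℂ)) = fun i => f i * Real.log (f i) := by
      funext x
      simp [hG]
    rw [hfun]
    rfl
  have hsum : ∑ i, ev i * Real.log (ev i) = ∑ i, d i * Real.log (d i) := by
    rw [← key ev, ← key d, me]
  have hcast : (∑ i, ((ev i : ℂ)) * ((Real.log (ev i) : ℝ) : ℂ))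
      = ((∑ i, ev i * Real.log (ev i) : ℝ) : ℂ) := by
    push_cast
    rfl
  rw [vnEntropy, htr, hcast, Complex.ofReal_re, hsum]

lemma vnEntropy_of_decomp' {m n : Type*} [Fintype m] [DecidableEq m] [Fintype n] [DecidableEq n]
    (e : m ≃ n) {ρ : Matrix m m ℂ} {W : Matrix n n ℂ} {d : n → ℝ} (hW : W * star W = 1)
    (hρ : ρ = (W * Matrix.diagonal (fun i => (d i : ℂ)) * star W).submatrix e e) :
    vnEntropy ρ = -∑ i : n, d i * Real.log (d i) := by
  have hW' : W.submatrix e e * star (W.submatrix e e) = 1 := by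
    rw [Matrix.star_eq_conjTranspose, Matrix.conjTranspose_submatrix,
      Matrix.submatrix_mul_equiv, ← Matrix.star_eq_conjTranspose, hW,
      Matrix.submatrix_one_equiv]
  have hdiag : Matrix.diagonal (fun i : m => (d (e i) : ℂ))
      = (Matrix.diagonal (fun i : n => (d i : ℂ))).submatrix e e := by
    rw [Matrix.submatrix_diagonal_equiv]
    rfl
  have hρ' : ρ = W.submatrix e e * Matrix.diagonal (fun i : m => (d (e i) : ℂ))
      * star (W.submatrix e e) := by
    rw [hρ, hdiag,
      show star (W.submatrix ⇑e ⇑e) = (star W).submatrix ⇑e ⇑e from by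
        rw [Matrix.star_eq_conjTranspose, Matrix.star_eq_conjTranspose,
          Matrix.conjTranspose_submatrix],
      Matrix.submatrix_mul_equiv, Matrix.submatrix_mul_equiv]
  rw [vnEntropy_of_decomp hW' hρ', ← Equiv.sum_comp e (fun i => d i * Real.log (d i))]

section Blk
variable {s ι t : Type*} [Fintype s] [DecidableEq s] [Fintype ι] [DecidableEq ι]
  [Fintype t] [DecidableEq t]

noncomputable def blkW (F : ι → Matrix s s ℂ) (G : ι → Matrix t t ℂ) :
    Matrix (s × ι × t) (s × ι × t) ℂ :=
  Matrix.of fun p q => if p.2.1 = q.2.1 then F p.2.1 p.1 q.1 * G p.2.1 p.2.2 q.2.2 else 0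

lemma blk_master (F : ι → Matrix s s ℂ) (G : ι → Matrix t t ℂ) (dv : s × ι × t → ℂ) :
    ∀ p q, (blkW F G * Matrix.diagonal dv * star (blkW F G)) p q
      = if p.2.1 = q.2.1 then
          (∑ x : s, ∑ y : t, F p.2.1 p.1 x * dv (x, p.2.1, y) * star (F p.2.1 q.1 x)
            * G p.2.1 p.2.2 y * star (G p.2.1 q.2.2 y))
        else 0 := by
  rintro ⟨a, k, b⟩ ⟨a', k', b'⟩
  rw [Matrix.mul_apply]
  simp only [Matrix.mul_diagonal, Matrix.star_eq_conjTranspose, Matrix.conjTranspose_apply,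
    blkW, Matrix.of_apply]
  rw [Fintype.sum_prod_type]
  have hterm : ∀ (x : s) (l : ι) (y : t),
      (if k = l then F k a x * G k b y else 0) * dv (x, l, y) *
        star (if k' = l then F k' a' x * G k' b' y else 0)
      = if k' = l then (if k = l then
          F k a x * dv (x, l, y) * star (F k a' x) * G k b y * star (G k b' y) else 0) else 0 := by
    intro x l y
    split_ifs with h1 h2
    · subst h1; subst h2
      simp only [star_mul']
      ring
    · simp
    · simp
    · simp
  calc ∑ x : s, ∑ y : ι × t,
        (if k = (x, y).2.1 then F k a (x, y).1 * G k b (x, y).2.2 else 0) * dv (x, y) *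
          star (if k' = (x, y).2.1 then F k' a' (x, y).1 * G k' b' (x, y).2.2 else 0)
      = ∑ x : s, ∑ l : ι, ∑ y : t,
        (if k = l then F k a x * G k b y else 0) * dv (x, l, y) *
          star (if k' = l then F k' a' x * G k' b' y else 0) := by
        refine Finset.sum_congr rfl fun x _ => ?_
        rw [Fintype.sum_prod_type]
    _ = ∑ x : s, ∑ l : ι, ∑ y : t, (if k' = l then (if k = l then
          F k a x * dv (x, l, y) * star (F k a' x) * G k b y * star (G k b' y) else 0) else 0) := by
        simp only [hterm]
    _ = ∑ x : s, ∑ y : t, (if k = k' then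
          F k a x * dv (x, k', y) * star (F k a' x) * G k b y * star (G k b' y) else 0) := by
        refine Finset.sum_congr rfl fun x _ => ?_
        rw [Finset.sum_comm]
        refine Finset.sum_congr rfl fun y _ => ?_
        rw [Finset.sum_ite_eq]
        simp only [Finset.mem_univ, if_true]
    _ = if k = k' then ∑ x : s, ∑ y : t,
          F k a x * dv (x, k, y) * star (F k a' x) * G k b y * star (G k b' y) else 0 := by
        by_cases h : k = k'
        · subst h; simp
        · simp [h]

lemma expand_conj (A : Matrix s s ℂ) (w : s → ℂ) (a a' : s) :
    (A * Matrix.diagonal w * star A) a a' = ∑ x, A a x * w x * star (A a' x) := by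
  rw [Matrix.mul_apply]
  simp only [Matrix.mul_diagonal, Matrix.star_eq_conjTranspose, Matrix.conjTranspose_apply]

lemma blkW_mul_star (F : ι → Matrix s s ℂ) (G : ι → Matrix t t ℂ)
    (hF : ∀ k, F k * star (F k) = 1) (hG : ∀ k, G k * star (G k) = 1) :
    blkW F G * star (blkW F G) = 1 := by
  ext ⟨a, k, b⟩ ⟨a', k', b'⟩
  have h1 : (blkW F G * star (blkW F G)) (a, k, b) (a', k', b')
      = (blkW F G * Matrix.diagonal (fun _ : s × ι × t => (1 : ℂ)) * star (blkW F G)) (a, k, b)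
          (a', k', b') := by
    rw [Matrix.diagonal_one, mul_one]
  rw [h1, blk_master]
  have hFe : ∑ x, F k a x * star (F k a' x) = (1 : Matrix s s ℂ) a a' := by
    rw [← hF k, Matrix.mul_apply]
    simp only [Matrix.star_eq_conjTranspose, Matrix.conjTranspose_apply]
  have hGe : ∑ y, G k b y * star (G k b' y) = (1 : Matrix t t ℂ) b b' := by
    rw [← hG k, Matrix.mul_apply]
    simp only [Matrix.star_eq_conjTranspose, Matrix.conjTranspose_apply]
  by_cases hk : k = k'
  · subst hk
    rw [if_pos rfl]
    have : ∑ x : s, ∑ y : t, F k a x * 1 * star (F k a' x) * G k b y * star (G k b' y)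
        = (∑ x, F k a x * star (F k a' x)) * (∑ y, G k b y * star (G k b' y)) := by
      rw [Finset.sum_mul_sum]
      refine Finset.sum_congr rfl fun x _ => Finset.sum_congr rfl fun y _ => by ring
    rw [this, hFe, hGe]
    by_cases ha : a = a' <;> by_cases hb : b = b' <;>
      simp [Matrix.one_apply, Prod.ext_iff, ha, hb]
  · rw [if_neg hk]
    have : ((a, k, b) : s × ι × t) ≠ (a', k', b') := by
      simp [Prod.ext_iff, hk]
    simp [Matrix.one_apply, this]

lemma blk_decomp (cc : ι → ℝ) (f : ι → s → ℝ) (g : ι → t → ℝ)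
    (F : ι → Matrix s s ℂ) (G : ι → Matrix t t ℂ) :
    (Matrix.of fun p q : s × ι × t => if p.2.1 = q.2.1 then
        (cc p.2.1 : ℂ) *
          ((F p.2.1 * Matrix.diagonal (fun a => (f p.2.1 a : ℂ)) * star (F p.2.1)) p.1 q.1) *
          ((G p.2.1 * Matrix.diagonal (fun b => (g p.2.1 b : ℂ)) * star (G p.2.1)) p.2.2 q.2.2)
      else 0)
    = blkW F G *
        Matrix.diagonal (fun z : s × ι × t =>
          ((cc z.2.1 * f z.2.1 z.1 * g z.2.1 z.2.2 : ℝ) : ℂ)) *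
        star (blkW F G) := by
  ext ⟨a, k, b⟩ ⟨a', k', b'⟩
  rw [blk_master]
  by_cases hk : k = k'
  · subst hk
    simp only [Matrix.of_apply, if_pos rfl, eq_self_iff_true, if_true]
    rw [expand_conj, expand_conj]
    simp only [Finset.mul_sum, Finset.sum_mul]
    rw [Finset.sum_comm]
    refine Finset.sum_congr rfl fun x _ => Finset.sum_congr rfl fun y _ => ?_
    push_cast
    ring
  · simp only [Matrix.of_apply, if_neg hk]

lemma blk_entropy {m : Type*} [Fintype m] [DecidableEq m]
    (e : m ≃ s × ι × t) (cc : ι → ℝ) (f : ι → s → ℝ) (g : ι → t → ℝ)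
    (F : ι → Matrix s s ℂ) (G : ι → Matrix t t ℂ)
    (hF : ∀ k, F k * star (F k) = 1) (hG : ∀ k, G k * star (G k) = 1)
    (M : Matrix m m ℂ)
    (hM : ∀ p q : m, M p q = if (e p).2.1 = (e q).2.1 then
        (cc (e p).2.1 : ℂ) *
          ((F (e p).2.1 * Matrix.diagonal (fun a => (f (e p).2.1 a : ℂ)) * star (F (e p).2.1))
            (e p).1 (e q).1) *
          ((G (e p).2.1 * Matrix.diagonal (fun b => (g (e p).2.1 b : ℂ)) * star (G (e p).2.1))
            (e p).2.2 (e q).2.2)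
      else 0) :
    vnEntropy M = -∑ z : s × ι × t,
      (cc z.2.1 * f z.2.1 z.1 * g z.2.1 z.2.2) *
        Real.log (cc z.2.1 * f z.2.1 z.1 * g z.2.1 z.2.2) := by
  apply vnEntropy_of_decomp' e (blkW_mul_star F G hF hG)
  rw [← blk_decomp cc f g F G]
  ext p q
  rw [Matrix.submatrix_apply, Matrix.of_apply, hM p q]

end Blk

noncomputable def pTrL {a b : Type*} [Fintype a] (M : Matrix (a × b) (a × b) ℂ) :
    Matrix b b ℂ :=
  Matrix.of fun u u' => ∑ x, M (x, u) (x, u')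

noncomputable def pTrR {a b : Type*} [Fintype b] (M : Matrix (a × b) (a × b) ℂ) :
    Matrix a a ℂ :=
  Matrix.of fun x x' => ∑ u, M (x, u) (x', u)

lemma pTrL_posSemidef {a b : Type*} [Fintype a] [Fintype b]
    {M : Matrix (a × b) (a × b) ℂ} (hM : M.PosSemidef) : (pTrL M).PosSemidef := by
  rw [Matrix.posSemidef_iff_dotProduct_mulVec]
  constructor
  · show _ᴴ = _
    ext u u'
    simp only [Matrix.conjTranspose_apply, pTrL, Matrix.of_apply, star_sum]
    refine Finset.sum_congr rfl fun x _ => ?_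
    have := congrFun (congrFun hM.1 (x, u)) (x, u')
    rw [Matrix.conjTranspose_apply] at this
    exact this
  · intro w
    have key : star w ⬝ᵥ (pTrL M) *ᵥ w
        = ∑ x : a, star (fun q : a × b => if q.1 = x then w q.2 else 0) ⬝ᵥ
            M *ᵥ (fun q : a × b => if q.1 = x then w q.2 else 0) := by
      simp only [dotProduct, Matrix.mulVec, pTrL, Matrix.of_apply, Pi.star_apply]
      simp only [Fintype.sum_prod_type, apply_ite, star_zero, ite_mul, zero_mul, mul_ite,
        mul_zero, Finset.sum_ite_eq, Finset.sum_ite_eq', Finset.mem_univ, if_true,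
        Finset.mul_sum, Finset.sum_mul, Finset.sum_ite_irrel, Finset.sum_const_zero]
      have mid : ∀ f : b → b → a → ℂ,
          ∑ x : b, ∑ y : b, ∑ i : a, f x y i = ∑ i : a, ∑ x : b, ∑ y : b, f x y i := by
        intro f
        calc ∑ x : b, ∑ y : b, ∑ i : a, f x y i
            = ∑ x : b, ∑ i : a, ∑ y : b, f x y i :=
              Finset.sum_congr rfl fun x _ => Finset.sum_comm
          _ = ∑ i : a, ∑ x : b, ∑ y : b, f x y i := Finset.sum_comm
      exact mid fun x y i => star (w x) * (M (i, x) (i, y) * w y)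
    rw [key]
    exact Finset.sum_nonneg fun x _ => hM.dotProduct_mulVec_nonneg _

lemma pTrL_trace {a b : Type*} [Fintype a] [Fintype b]
    (M : Matrix (a × b) (a × b) ℂ) : (pTrL M).trace = M.trace := by
  rw [Matrix.trace, Matrix.trace, Fintype.sum_prod_type, Finset.sum_comm]
  rfl

lemma pTrR_posSemidef {a b : Type*} [Fintype a] [Fintype b]
    {M : Matrix (a × b) (a × b) ℂ} (hM : M.PosSemidef) : (pTrR M).PosSemidef := by
  rw [Matrix.posSemidef_iff_dotProduct_mulVec]
  constructor
  · show _ᴴ = _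
    ext x x'
    simp only [Matrix.conjTranspose_apply, pTrR, Matrix.of_apply, star_sum]
    refine Finset.sum_congr rfl fun u _ => ?_
    have := congrFun (congrFun hM.1 (x, u)) (x', u)
    rw [Matrix.conjTranspose_apply] at this
    exact this
  · intro w
    have key : star w ⬝ᵥ (pTrR M) *ᵥ w
        = ∑ u : b, star (fun q : a × b => if q.2 = u then w q.1 else 0) ⬝ᵥ
            M *ᵥ (fun q : a × b => if q.2 = u then w q.1 else 0) := by
      simp only [dotProduct, Matrix.mulVec, pTrR, Matrix.of_apply, Pi.star_apply]
      simp only [Fintype.sum_prod_type, apply_ite, star_zero, ite_mul, zero_mul, mul_ite,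
        mul_zero, Finset.sum_ite_eq, Finset.sum_ite_eq', Finset.mem_univ, if_true,
        Finset.mul_sum, Finset.sum_mul, Finset.sum_ite_irrel, Finset.sum_const_zero]
      have mid : ∀ f : a → a → b → ℂ,
          ∑ x : a, ∑ y : a, ∑ i : b, f x y i = ∑ i : b, ∑ x : a, ∑ y : a, f x y i := by
        intro f
        calc ∑ x : a, ∑ y : a, ∑ i : b, f x y i
            = ∑ x : a, ∑ i : b, ∑ y : a, f x y i :=
              Finset.sum_congr rfl fun x _ => Finset.sum_comm
          _ = ∑ i : b, ∑ x : a, ∑ y : a, f x y i := Finset.sum_comm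
      exact mid fun x y i => star (w x) * (M (x, i) (y, i) * w y)
    rw [key]
    exact Finset.sum_nonneg fun u _ => hM.dotProduct_mulVec_nonneg _

lemma pTrR_trace {a b : Type*} [Fintype a] [Fintype b]
    (M : Matrix (a × b) (a × b) ℂ) : (pTrR M).trace = M.trace := by
  rw [Matrix.trace, Matrix.trace, Fintype.sum_prod_type]
  rfl

lemma spectral'' {n : Type*} [Fintype n] [DecidableEq n] {A : Matrix n n ℂ}
    (hA : A.IsHermitian) :
    A = (hA.eigenvectorUnitary : Matrix n n ℂ) *
        Matrix.diagonal (fun i => (hA.eigenvalues i : ℂ)) *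
        star (hA.eigenvectorUnitary : Matrix n n ℂ) := by
  convert hA.spectral_theorem using 2
  rw [Unitary.conjStarAlgAut_apply]; rfl

lemma eigen_sum_one {n : Type*} [Fintype n] [DecidableEq n] {ρ : Matrix n n ℂ}
    (h : ρ.IsHermitian) (htr : ρ.trace = 1) : ∑ i, h.eigenvalues i = 1 := by
  have hU' : star (h.eigenvectorUnitary : Matrix n n ℂ) * (h.eigenvectorUnitary : Matrix n n ℂ)
      = 1 := Matrix.mem_unitaryGroup_iff'.mp h.eigenvectorUnitary.2
  have htr2 : ρ.trace = ∑ i, (h.eigenvalues i : ℂ) := by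
    conv_lhs => rw [spectral'' h]
    rw [Matrix.trace_mul_cycle, hU', one_mul, Matrix.trace_diagonal]
  rw [htr] at htr2
  exact_mod_cast htr2.symm

lemma key2 (x y : ℝ) (hx : 0 ≤ x) (hy : 0 ≤ y) :
    (x * y) * Real.log (x * y) = y * (x * Real.log x) + x * (y * Real.log y) := by
  rcases hx.eq_or_lt with h | h
  · simp [← h]
  rcases hy.eq_or_lt with h2 | h2
  · simp [← h2]
  rw [Real.log_mul h.ne' h2.ne']
  ring

lemma sum_xlogx_prod {A B : Type*} [Fintype A] [Fintype B] (c : ℝ) (hc : 0 ≤ c)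
    (f : A → ℝ) (hf : ∀ a, 0 ≤ f a) (hf1 : ∑ a, f a = 1)
    (g : B → ℝ) (hg : ∀ b, 0 ≤ g b) (hg1 : ∑ b, g b = 1) :
    ∑ a, ∑ b, (c * f a * g b) * Real.log (c * f a * g b)
      = c * Real.log c + c * ∑ a, f a * Real.log (f a) + c * ∑ b, g b * Real.log (g b) := by
  have step1 : ∀ a : A, ∑ b, (c * f a * g b) * Real.log (c * f a * g b)
      = (c * f a) * Real.log (c * f a) + (c * f a) * ∑ b, g b * Real.log (g b) := by
    intro a
    have hpt : ∀ b, (c * f a * g b) * Real.log (c * f a * g b)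
        = g b * ((c * f a) * Real.log (c * f a)) + (c * f a) * (g b * Real.log (g b)) :=
      fun b => key2 (c * f a) (g b) (mul_nonneg hc (hf a)) (hg b)
    calc ∑ b, (c * f a * g b) * Real.log (c * f a * g b)
        = ∑ b, (g b * ((c * f a) * Real.log (c * f a)) + (c * f a) * (g b * Real.log (g b))) :=
          Finset.sum_congr rfl fun b _ => hpt b
      _ = (∑ b, g b) * ((c * f a) * Real.log (c * f a)) + (c * f a) * ∑ b, g b * Real.log (g b) := by
          rw [Finset.sum_add_distrib, ← Finset.sum_mul, ← Finset.mul_sum]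
      _ = _ := by rw [hg1, one_mul]
  have step2 : ∀ a : A, (c * f a) * Real.log (c * f a)
      = f a * (c * Real.log c) + c * (f a * Real.log (f a)) :=
    fun a => key2 c (f a) hc (hf a)
  have h3 : ∑ a, f a * (c * Real.log c) = c * Real.log c := by
    rw [← Finset.sum_mul, hf1, one_mul]
  have h4 : ∑ a, c * (f a * Real.log (f a)) = c * ∑ a, f a * Real.log (f a) :=
    (Finset.mul_sum _ _ _).symm
  have h5 : ∑ a, (c * f a) * ∑ b, g b * Real.log (g b)
      = c * ∑ b, g b * Real.log (g b) := by
    have hpt : ∀ a, (c * f a) * ∑ b, g b * Real.log (g b)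
        = (c * ∑ b, g b * Real.log (g b)) * f a := fun a => by ring
    rw [Finset.sum_congr rfl fun a _ => hpt a, ← Finset.mul_sum, hf1, mul_one]
  calc ∑ a, ∑ b, (c * f a * g b) * Real.log (c * f a * g b)
      = ∑ a, (f a * (c * Real.log c) + c * (f a * Real.log (f a))
          + (c * f a) * ∑ b, g b * Real.log (g b)) := by
        refine Finset.sum_congr rfl fun a _ => ?_
        rw [step1 a, step2 a]
    _ = (∑ a, f a * (c * Real.log c)) + (∑ a, c * (f a * Real.log (f a)))
        + ∑ a, (c * f a) * ∑ b, g b * Real.log (g b) := by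
        rw [Finset.sum_add_distrib, Finset.sum_add_distrib]
    _ = _ := by rw [h3, h4, h5]

lemma tri_sum {S T ι : Type*} [Fintype S] [Fintype T] [Fintype ι]
    (p : ι → ℝ) (hp0 : ∀ k, 0 ≤ p k)
    (f : ι → S → ℝ) (hf0 : ∀ k a, 0 ≤ f k a) (hf1 : ∀ k, ∑ a, f k a = 1)
    (g : ι → T → ℝ) (hg0 : ∀ k b, 0 ≤ g k b) (hg1 : ∀ k, ∑ b, g k b = 1) :
    ∑ z : S × ι × T, (p z.2.1 * f z.2.1 z.1 * g z.2.1 z.2.2)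
        * Real.log (p z.2.1 * f z.2.1 z.1 * g z.2.1 z.2.2)
      = ∑ k, (p k * Real.log (p k) + p k * ∑ a, f k a * Real.log (f k a)
          + p k * ∑ b, g k b * Real.log (g k b)) := by
  simp only [Fintype.sum_prod_type]
  rw [Finset.sum_comm]
  refine Finset.sum_congr rfl fun k _ => ?_
  exact sum_xlogx_prod (p k) (hp0 k) (f k) (hf0 k) (hf1 k) (g k) (hg0 k) (hg1 k)

/-- Block-decomposed states `σ = ⨁_j p(j) · α_j^{R B^R} ⊗ |j⟩⟨j| ⊗ β_j^{B^C C}` are quantum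
Markov states: `S(σ^{RB}) + S(σ^{BC}) = S(σ^{RBC}) + S(σ^B)`, i.e. `I(R:C|B)_σ = 0`. -/
theorem block_decomposed_isMarkov {r u j v c : Type*}
    [Fintype r] [DecidableEq r] [Fintype u] [DecidableEq u] [Fintype j] [DecidableEq j]
    [Fintype v] [DecidableEq v] [Fintype c] [DecidableEq c]
    (p : j → ℝ) (hp0 : ∀ x, 0 ≤ p x) (hp1 : ∑ x, p x = 1)
    (α : j → Matrix (r × u) (r × u) ℂ) (hα : ∀ x, IsDensityMatrix (α x))
    (β : j → Matrix (v × c) (v × c) ℂ) (hβ : ∀ x, IsDensityMatrix (β x))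
    (σ : Matrix (r × (u × j × v) × c) (r × (u × j × v) × c) ℂ)
    (hσ : ∀ x y : r × (u × j × v) × c,
      σ x y = if x.2.1.2.1 = y.2.1.2.1 then
          (p x.2.1.2.1 : ℂ) * α x.2.1.2.1 (x.1, x.2.1.1) (y.1, y.2.1.1)
            * β x.2.1.2.1 (x.2.1.2.2, x.2.2) (y.2.1.2.2, y.2.2)
        else 0) :
    vnEntropy (margRB σ) + vnEntropy (margBC σ) = vnEntropy σ + vnEntropy (margB σ) := by
  classical
  have hαH : ∀ k, (α k).IsHermitian := fun k => (hα k).1.1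
  have hβH : ∀ k, (β k).IsHermitian := fun k => (hβ k).1.1
  have htaPSD : ∀ k, (pTrL (α k)).PosSemidef := fun k => pTrL_posSemidef (hα k).1
  have htbPSD : ∀ k, (pTrR (β k)).PosSemidef := fun k => pTrR_posSemidef (hβ k).1
  have hFA : ∀ k, ((hαH k).eigenvectorUnitary : Matrix (r × u) (r × u) ℂ) *
      star ((hαH k).eigenvectorUnitary : Matrix (r × u) (r × u) ℂ) = 1 :=
    fun k => Matrix.mem_unitaryGroup_iff.mp (hαH k).eigenvectorUnitary.2
  have hFB : ∀ k, ((hβH k).eigenvectorUnitary : Matrix (v × c) (v × c) ℂ) *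
      star ((hβH k).eigenvectorUnitary : Matrix (v × c) (v × c) ℂ) = 1 :=
    fun k => Matrix.mem_unitaryGroup_iff.mp (hβH k).eigenvectorUnitary.2
  have hFTA : ∀ k, (((htaPSD k).1).eigenvectorUnitary : Matrix u u ℂ) *
      star (((htaPSD k).1).eigenvectorUnitary : Matrix u u ℂ) = 1 :=
    fun k => Matrix.mem_unitaryGroup_iff.mp ((htaPSD k).1).eigenvectorUnitary.2
  have hFTB : ∀ k, (((htbPSD k).1).eigenvectorUnitary : Matrix v v ℂ) *
      star (((htbPSD k).1).eigenvectorUnitary : Matrix v v ℂ) = 1 :=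
    fun k => Matrix.mem_unitaryGroup_iff.mp ((htbPSD k).1).eigenvectorUnitary.2
  -- nonnegativity and normalization of eigenvalues
  have hfa0 : ∀ k i, 0 ≤ (hαH k).eigenvalues i := fun k i => (hα k).1.eigenvalues_nonneg i
  have hfb0 : ∀ k i, 0 ≤ (hβH k).eigenvalues i := fun k i => (hβ k).1.eigenvalues_nonneg i
  have hfta0 : ∀ k i, 0 ≤ ((htaPSD k).1).eigenvalues i :=
    fun k i => (htaPSD k).eigenvalues_nonneg i
  have hftb0 : ∀ k i, 0 ≤ ((htbPSD k).1).eigenvalues i :=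
    fun k i => (htbPSD k).eigenvalues_nonneg i
  have hfa1 : ∀ k, ∑ i, (hαH k).eigenvalues i = 1 := fun k => eigen_sum_one (hαH k) (hα k).2
  have hfb1 : ∀ k, ∑ i, (hβH k).eigenvalues i = 1 := fun k => eigen_sum_one (hβH k) (hβ k).2
  have hfta1 : ∀ k, ∑ i, ((htaPSD k).1).eigenvalues i = 1 :=
    fun k => eigen_sum_one ((htaPSD k).1) ((pTrL_trace (α k)).trans (hα k).2)
  have hftb1 : ∀ k, ∑ i, ((htbPSD k).1).eigenvalues i = 1 :=
    fun k => eigen_sum_one ((htbPSD k).1) ((pTrR_trace (β k)).trans (hβ k).2)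
  -- the reindexing equivalences
  let eσ : (r × (u × j × v) × c) ≃ ((r × u) × j × (v × c)) :=
    ⟨fun pp => ((pp.1, pp.2.1.1), pp.2.1.2.1, (pp.2.1.2.2, pp.2.2)),
     fun qq => (qq.1.1, (qq.1.2, qq.2.1, qq.2.2.1), qq.2.2.2),
     fun _ => rfl, fun _ => rfl⟩
  let eRB : (r × (u × j × v)) ≃ ((r × u) × j × v) :=
    ⟨fun pp => ((pp.1, pp.2.1), pp.2.2.1, pp.2.2.2),
     fun qq => (qq.1.1, (qq.1.2, qq.2.1, qq.2.2)),
     fun _ => rfl, fun _ => rfl⟩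
  let eBC : ((u × j × v) × c) ≃ (u × j × (v × c)) :=
    ⟨fun pp => (pp.1.1, pp.1.2.1, (pp.1.2.2, pp.2)),
     fun qq => ((qq.1, qq.2.1, qq.2.2.1), qq.2.2.2),
     fun _ => rfl, fun _ => rfl⟩
  let eB : (u × j × v) ≃ (u × j × v) := Equiv.refl _
  -- entries of the marginals
  have hRB : ∀ pp qq : r × (u × j × v), margRB σ pp qq
      = if pp.2.2.1 = qq.2.2.1 then
          (p pp.2.2.1 : ℂ) * α pp.2.2.1 (pp.1, pp.2.1) (qq.1, qq.2.1)
            * pTrR (β pp.2.2.1) pp.2.2.2 qq.2.2.2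
        else 0 := by
    rintro ⟨x, u1, j1, v1⟩ ⟨x', u2, j2, v2⟩
    show ∑ z : c, σ (x, (u1, j1, v1), z) (x', (u2, j2, v2), z) = _
    simp only [hσ]
    by_cases h : j1 = j2
    · subst h
      simp only [eq_self_iff_true, if_true, pTrR, Matrix.of_apply, Finset.mul_sum]
    · simp [h]
  have hBC : ∀ pp qq : (u × j × v) × c, margBC σ pp qq
      = if pp.1.2.1 = qq.1.2.1 then
          (p pp.1.2.1 : ℂ) * pTrL (α pp.1.2.1) pp.1.1 qq.1.1
            * β pp.1.2.1 (pp.1.2.2, pp.2) (qq.1.2.2, qq.2)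
        else 0 := by
    rintro ⟨⟨u1, j1, v1⟩, z⟩ ⟨⟨u2, j2, v2⟩, z'⟩
    show ∑ x : r, σ (x, (u1, j1, v1), z) (x, (u2, j2, v2), z') = _
    simp only [hσ]
    by_cases h : j1 = j2
    · subst h
      simp only [eq_self_iff_true, if_true, pTrL, Matrix.of_apply, Finset.sum_mul, Finset.mul_sum]
    · simp [h]
  have hB : ∀ pp qq : u × j × v, margB σ pp qq
      = if pp.2.1 = qq.2.1 then
          (p pp.2.1 : ℂ) * pTrL (α pp.2.1) pp.1 qq.1 * pTrR (β pp.2.1) pp.2.2 qq.2.2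
        else 0 := by
    rintro ⟨u1, j1, v1⟩ ⟨u2, j2, v2⟩
    show ∑ x : r, ∑ z : c, σ (x, (u1, j1, v1), z) (x, (u2, j2, v2), z) = _
    simp only [hσ]
    by_cases h : j1 = j2
    · subst h
      simp only [eq_self_iff_true, if_true, pTrL, pTrR, Matrix.of_apply, Finset.mul_sum,
        Finset.sum_mul]
      exact Finset.sum_comm
    · simp [h]
  -- the four entropies
  have Eσ : vnEntropy σ = -∑ z : (r × u) × j × (v × c),
      (p z.2.1 * (hαH z.2.1).eigenvalues z.1 * (hβH z.2.1).eigenvalues z.2.2) *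
        Real.log (p z.2.1 * (hαH z.2.1).eigenvalues z.1 * (hβH z.2.1).eigenvalues z.2.2) := by
    refine blk_entropy eσ p (fun k => (hαH k).eigenvalues) (fun k => (hβH k).eigenvalues)
      (fun k => ((hαH k).eigenvectorUnitary : Matrix (r × u) (r × u) ℂ))
      (fun k => ((hβH k).eigenvectorUnitary : Matrix (v × c) (v × c) ℂ)) hFA hFB σ ?_
    intro pp qq
    rw [hσ pp qq]
    beta_reduce
    rw [← spectral'' (hαH ((eσ pp).2.1)), ← spectral'' (hβH ((eσ pp).2.1))]
    rfl
  have ERB : vnEntropy (margRB σ) = -∑ z : (r × u) × j × v,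
      (p z.2.1 * (hαH z.2.1).eigenvalues z.1 * ((htbPSD z.2.1).1).eigenvalues z.2.2) *
        Real.log (p z.2.1 * (hαH z.2.1).eigenvalues z.1 * ((htbPSD z.2.1).1).eigenvalues z.2.2) := by
    refine blk_entropy eRB p (fun k => (hαH k).eigenvalues)
      (fun k => ((htbPSD k).1).eigenvalues)
      (fun k => ((hαH k).eigenvectorUnitary : Matrix (r × u) (r × u) ℂ))
      (fun k => (((htbPSD k).1).eigenvectorUnitary : Matrix v v ℂ)) hFA hFTB (margRB σ) ?_
    intro pp qq
    rw [hRB pp qq]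
    beta_reduce
    rw [← spectral'' (hαH ((eRB pp).2.1)), ← spectral'' ((htbPSD ((eRB pp).2.1)).1)]
    rfl
  have EBC : vnEntropy (margBC σ) = -∑ z : u × j × (v × c),
      (p z.2.1 * ((htaPSD z.2.1).1).eigenvalues z.1 * (hβH z.2.1).eigenvalues z.2.2) *
        Real.log (p z.2.1 * ((htaPSD z.2.1).1).eigenvalues z.1 * (hβH z.2.1).eigenvalues z.2.2) := by
    refine blk_entropy eBC p (fun k => ((htaPSD k).1).eigenvalues)
      (fun k => (hβH k).eigenvalues)
      (fun k => (((htaPSD k).1).eigenvectorUnitary : Matrix u u ℂ))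
      (fun k => ((hβH k).eigenvectorUnitary : Matrix (v × c) (v × c) ℂ)) hFTA hFB (margBC σ) ?_
    intro pp qq
    rw [hBC pp qq]
    beta_reduce
    rw [← spectral'' ((htaPSD ((eBC pp).2.1)).1), ← spectral'' (hβH ((eBC pp).2.1))]
    rfl
  have EB : vnEntropy (margB σ) = -∑ z : u × j × v,
      (p z.2.1 * ((htaPSD z.2.1).1).eigenvalues z.1 * ((htbPSD z.2.1).1).eigenvalues z.2.2) *
        Real.log (p z.2.1 * ((htaPSD z.2.1).1).eigenvalues z.1
          * ((htbPSD z.2.1).1).eigenvalues z.2.2) := by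
    refine blk_entropy eB p (fun k => ((htaPSD k).1).eigenvalues)
      (fun k => ((htbPSD k).1).eigenvalues)
      (fun k => (((htaPSD k).1).eigenvectorUnitary : Matrix u u ℂ))
      (fun k => (((htbPSD k).1).eigenvectorUnitary : Matrix v v ℂ)) hFTA hFTB (margB σ) ?_
    intro pp qq
    rw [hB pp qq]
    beta_reduce
    rw [← spectral'' ((htaPSD ((eB pp).2.1)).1), ← spectral'' ((htbPSD ((eB pp).2.1)).1)]
    rfl
  rw [Eσ, ERB, EBC, EB,
    tri_sum p hp0 (fun k => (hαH k).eigenvalues) hfa0 hfa1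
      (fun k => ((htbPSD k).1).eigenvalues) hftb0 hftb1,
    tri_sum p hp0 (fun k => ((htaPSD k).1).eigenvalues) hfta0 hfta1
      (fun k => (hβH k).eigenvalues) hfb0 hfb1,
    tri_sum p hp0 (fun k => (hαH k).eigenvalues) hfa0 hfa1
      (fun k => (hβH k).eigenvalues) hfb0 hfb1,
    tri_sum p hp0 (fun k => ((htaPSD k).1).eigenvalues) hfta0 hfta1
      (fun k => ((htbPSD k).1).eigenvalues) hftb0 hftb1]
  rw [← neg_add, ← neg_add, ← Finset.sum_add_distrib, ← Finset.sum_add_distrib]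
  congr 1
  exact Finset.sum_congr rfl fun k _ => by ring
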